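/- For coprime positive integers a,b>1 and k≥1, the number of nonnegative integers not representable as a nonnegative integer combination of the geometric sequence a^k, a^{k-1}b, ..., b^k equals ((b−1)a^{k+1} − (a−1)b^{k+1} + a − b)/(2(a−b)) when a≠b. -/

import Mathlib

open Finset

private def GRep (a b k n : ℕ) : Prop :=
  ∃ c : Fin (k + 1) → ℕ, n = ∑ i : Fin (k + 1), c i * (a ^ (k - (i : ℕ)) * b ^ (i : ℕ))

private lemma grep_zero (a b n : ℕ) : GRep a b 0 n :=
  ⟨fun _ => n, by simp⟩

private lemma grep_succ {a : ℕ} (b k : ℕ) (ha : 0 < a) (n : ℕ) :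
    GRep a b (k + 1) n ↔ ∃ d m, d < a ∧ GRep a b k m ∧ n = a * m + d * b ^ (k + 1) := by
  constructor
  · rintro ⟨c, rfl⟩
    set q := c (Fin.last (k + 1)) / a with hq
    set d := c (Fin.last (k + 1)) % a with hd
    refine ⟨d, ∑ i : Fin (k + 1), (c i.castSucc + if i = Fin.last k then q * b else 0) *
      (a ^ (k - (i : ℕ)) * b ^ (i : ℕ)), Nat.mod_lt _ ha,
      ⟨fun i => c i.castSucc + if i = Fin.last k then q * b else 0, rfl⟩, ?_⟩
    rw [Fin.sum_univ_castSucc (fun i : Fin (k + 2) => c i * (a ^ (k + 1 - (i : ℕ)) * b ^ (i : ℕ)))]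
    rw [Finset.mul_sum]
    have h1 : ∀ i : Fin (k + 1),
        a * ((c i.castSucc + if i = Fin.last k then q * b else 0) * (a ^ (k - (i : ℕ)) * b ^ (i : ℕ)))
        = c i.castSucc * (a ^ (k + 1 - ((i.castSucc : Fin (k+2)) : ℕ)) * b ^ (i : ℕ))
          + (if i = Fin.last k then q * b * (a * (a ^ (k - (i : ℕ)) * b ^ (i : ℕ))) else 0) := by
      intro i
      have hi : (i : ℕ) ≤ k := Fin.is_le i
      have : k + 1 - (i : ℕ) = (k - (i : ℕ)) + 1 := by omega
      simp only [Fin.coe_castSucc, this, pow_succ]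
      split <;> ring
    rw [Finset.sum_congr rfl (fun i _ => h1 i), Finset.sum_add_distrib, Finset.sum_ite_eq']
    simp only [Finset.mem_univ, if_true, Fin.val_last, Fin.coe_castSucc, Nat.sub_self,
      Nat.add_sub_cancel_left, pow_zero, one_mul]
    have h2 : c (Fin.last (k + 1)) = a * q + d := (Nat.div_add_mod _ a).symm
    rw [h2, pow_succ]
    ring
  · rintro ⟨d, m, hd, ⟨c, rfl⟩, rfl⟩
    refine ⟨Fin.snoc c d, ?_⟩
    conv_rhs => rw [Fin.sum_univ_castSucc]
    simp only [Fin.snoc_castSucc, Fin.snoc_last, Fin.coe_castSucc, Fin.val_last,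
      Nat.sub_self, pow_zero, one_mul, Nat.add_sub_cancel_left]
    rw [Finset.mul_sum]
    congr 1
    refine Finset.sum_congr rfl fun i _ => ?_
    have hi : (i : ℕ) ≤ k := Fin.is_le i
    have : k + 1 - (i : ℕ) = (k - (i : ℕ)) + 1 := by omega
    rw [this, pow_succ]
    ring

private def Gn (a b : ℕ) : ℕ → ℕ
  | 0 => 0
  | k + 1 => a * Gn a b k + ∑ d ∈ Finset.range a, d * b ^ (k + 1) / a

private lemma esum {a N : ℕ} (ha : 1 < a) (hcop : Nat.Coprime a N) :
    ((∑ d ∈ range a, d * N / a : ℕ) : ℚ) = ((a : ℚ) - 1) * ((N : ℚ) - 1) / 2 := by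
  have ha0 : 0 < a := by omega
  have h1 : a * (∑ d ∈ range a, d * N / a) + ∑ d ∈ range a, d * N % a
      = (∑ d ∈ range a, d) * N := by
    rw [Finset.mul_sum, ← Finset.sum_add_distrib, Finset.sum_mul]
    exact Finset.sum_congr rfl fun d _ => Nat.div_add_mod (d * N) a
  have h2 : ∑ d ∈ range a, d * N % a = ∑ d ∈ range a, d := by
    obtain ⟨x, -, hx⟩ := Nat.exists_mul_mod_eq_one_of_coprime hcop.symm ha
    have hNx : N * x ≡ 1 [MOD a] := by
      show N * x % a = 1 % a
      rw [hx, Nat.mod_eq_of_lt ha]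
    refine Finset.sum_nbij' (fun d => d * N % a) (fun r => r * x % a)
      (fun d _ => mem_range.mpr (Nat.mod_lt _ ha0))
      (fun r _ => mem_range.mpr (Nat.mod_lt _ ha0)) ?_ ?_ (fun d _ => rfl)
    · intro d hd
      rw [mem_range] at hd
      have c1 : d * N % a * x ≡ d * (N * x) [MOD a] := by
        calc d * N % a * x ≡ d * N * x [MOD a] := (Nat.mod_modEq (d * N) a).mul_right x
          _ = d * (N * x) := by ring
      have c2 : d * (N * x) ≡ d * 1 [MOD a] := hNx.mul_left d
      have := c1.trans c2
      calc d * N % a * x % a = (d * 1) % a := this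
        _ = d := by rw [mul_one, Nat.mod_eq_of_lt hd]
    · intro r hr
      rw [mem_range] at hr
      have c1 : r * x % a * N ≡ r * (N * x) [MOD a] := by
        calc r * x % a * N ≡ r * x * N [MOD a] := (Nat.mod_modEq (r * x) a).mul_right N
          _ = r * (N * x) := by ring
      have c2 : r * (N * x) ≡ r * 1 [MOD a] := hNx.mul_left r
      have := c1.trans c2
      calc r * x % a * N % a = (r * 1) % a := this
        _ = r := by rw [mul_one, Nat.mod_eq_of_lt hr]
  have h3 : (∑ d ∈ range a, d) * 2 = a * (a - 1) := Finset.sum_range_id_mul_two a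
  set E : ℕ := ∑ d ∈ range a, d * N / a with hE
  set T : ℕ := ∑ d ∈ range a, d with hT
  rw [h2] at h1
  have hq1 : (a : ℚ) * E + T = (T : ℚ) * N := by exact_mod_cast congrArg (Nat.cast (R := ℚ)) h1
  have hq3 : (T : ℚ) * 2 = a * ((a : ℚ) - 1) := by
    have h4 : (T : ℚ) * 2 = (a : ℚ) * ((a : ℚ) - 1) := by
      have := congrArg (Nat.cast (R := ℚ)) h3
      rw [Nat.cast_mul, Nat.cast_mul, Nat.cast_sub (by omega : 1 ≤ a)] at this
      push_cast at this ⊢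
      linarith
    exact h4
  have haQ : (a : ℚ) ≠ 0 := by positivity
  have hEa : (a : ℚ) * E = (T : ℚ) * ((N : ℚ) - 1) := by linear_combination hq1
  rw [eq_div_iff (two_ne_zero)]
  have key : (a : ℚ) * ((E : ℚ) * 2) = a * (((a : ℚ) - 1) * ((N : ℚ) - 1)) := by
    linear_combination 2 * hEa + ((N : ℚ) - 1) * hq3
  exact mul_left_cancel₀ haQ key

private lemma card_gaps {a b : ℕ} (ha : 1 < a) (hab : Nat.Coprime a b) :
    ∀ k (F : Finset ℕ), (∀ n, n ∈ F ↔ ¬ GRep a b k n) → F.card = Gn a b k := by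
  intro k
  induction k with
  | zero =>
    intro F hF
    have : F = ∅ := Finset.eq_empty_of_forall_notMem fun n hn => (hF n).1 hn (grep_zero a b n)
    simp [this, Gn]
  | succ k ih =>
    intro F hF
    have ha0 : 0 < a := by omega
    have hcop : Nat.Coprime a (b ^ (k + 1)) := Nat.Coprime.pow_right _ hab
    obtain ⟨x, -, hx⟩ := Nat.exists_mul_mod_eq_one_of_coprime hcop.symm ha
    have hNx : b ^ (k + 1) * x ≡ 1 [MOD a] := by
      show b ^ (k + 1) * x % a = 1 % a
      rw [hx, Nat.mod_eq_of_lt ha]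
    -- f n := n * x % a picks out the unique d < a with n ≡ d * b^(k+1) [MOD a]
    have hfd : ∀ d n : ℕ, d < a → n ≡ d * b ^ (k + 1) [MOD a] → n * x % a = d := by
      intro d n hd hcong
      have h1 : n * x ≡ d * b ^ (k + 1) * x [MOD a] := hcong.mul_right x
      have h2 : d * b ^ (k + 1) * x ≡ d * 1 [MOD a] := by
        have := hNx.mul_left d
        calc d * b ^ (k + 1) * x = d * (b ^ (k + 1) * x) := by ring
          _ ≡ d * 1 [MOD a] := this
      have h3 : n * x ≡ d [MOD a] := by simpa using h1.trans h2
      calc n * x % a = d % a := h3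
        _ = d := Nat.mod_eq_of_lt hd
    have hfn : ∀ n : ℕ, n ≡ (n * x % a) * b ^ (k + 1) [MOD a] := by
      intro n
      have h1 : (n * x % a) * b ^ (k + 1) ≡ n * x * b ^ (k + 1) [MOD a] :=
        (Nat.mod_modEq (n * x) a).mul_right _
      have h2 : n * x * b ^ (k + 1) ≡ n * 1 [MOD a] := by
        have := hNx.mul_left n
        calc n * x * b ^ (k + 1) = n * (b ^ (k + 1) * x) := by ring
          _ ≡ n * 1 [MOD a] := this
      exact ((h1.trans h2).trans (by rw [mul_one])).symm
    -- the unique residue of any gap decomposition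
    have hduniq : ∀ d d' : ℕ, d < a → d' < a →
        d * b ^ (k + 1) ≡ d' * b ^ (k + 1) [MOD a] → d = d' := by
      intro d d' hd hd' hcong
      have := Nat.ModEq.cancel_right_of_coprime (by simpa [Nat.Coprime] using hcop) hcong
      calc d = d % a := (Nat.mod_eq_of_lt hd).symm
        _ = d' % a := this
        _ = d' := Nat.mod_eq_of_lt hd'
    -- fiberwise count
    have hfib : F.card = ∑ d ∈ range a,
        (F.filter (fun n => n * x % a = d)).card :=
      Finset.card_eq_sum_card_fiberwise (fun n _ => mem_range.mpr (Nat.mod_lt _ ha0))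
    -- The level-k gap set, realized as a finset
    set Fm := (F.filter (fun n => a ∣ n)).image (fun n => n / a) with hFmdef
    have hFm : ∀ m, m ∈ Fm ↔ ¬ GRep a b k m := by
      intro m
      rw [hFmdef]
      simp only [mem_image, mem_filter]
      constructor
      · rintro ⟨n, ⟨hnF, ⟨t, rfl⟩⟩, rfl⟩
        rw [Nat.mul_div_cancel_left t ha0]
        intro hrep
        exact (hF _).1 hnF ((grep_succ b k ha0 _).2 ⟨0, t, ha0, hrep, by ring⟩)
      · intro hm
        refine ⟨a * m, ⟨?_, Dvd.intro m rfl⟩, Nat.mul_div_cancel_left m ha0⟩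
        rw [hF, grep_succ b k ha0]
        rintro ⟨d, m', hd, hm', heq⟩
        have hdvd : a ∣ d * b ^ (k + 1) := by
          have h1 : d * b ^ (k + 1) = a * m - a * m' := by omega
          have h2 : a ∣ a * m - a * m' := Nat.dvd_sub ⟨m, rfl⟩ ⟨m', rfl⟩
          rw [h1]; exact h2
        have hd0 : d = 0 := Nat.eq_zero_of_dvd_of_lt (hcop.dvd_of_dvd_mul_right hdvd) hd
        subst hd0
        simp only [zero_mul, add_zero] at heq
        exact hm (Nat.eq_of_mul_eq_mul_left ha0 heq ▸ hm')
    have hFmcard : Fm.card = Gn a b k := ih Fm hFm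
    -- per-fiber cardinality
    have hfibcard : ∀ d ∈ range a,
        (F.filter (fun n => n * x % a = d)).card = d * b ^ (k + 1) / a + Gn a b k := by
      intro d hd
      rw [mem_range] at hd
      set lowS := (range (d * b ^ (k + 1) / a)).image
        (fun j => d * b ^ (k + 1) - a * (j + 1)) with hlowdef
      set highS := Fm.image (fun m => a * m + d * b ^ (k + 1)) with hhighdef
      have hlowmem : ∀ {j}, j < d * b ^ (k + 1) / a → a * (j + 1) ≤ d * b ^ (k + 1) := by
        intro j hj
        have h1 : j + 1 ≤ d * b ^ (k + 1) / a := hj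
        calc a * (j + 1) = (j + 1) * a := by ring
          _ ≤ (d * b ^ (k + 1) / a) * a := Nat.mul_le_mul_right a h1
          _ ≤ d * b ^ (k + 1) := Nat.div_mul_le_self _ a
      have hset : F.filter (fun n => n * x % a = d) = lowS ∪ highS := by
        ext n
        simp only [mem_filter, mem_union, hlowdef, hhighdef, mem_image, mem_range]
        constructor
        · rintro ⟨hnF, hfval⟩
          have hcong : n ≡ d * b ^ (k + 1) [MOD a] := hfval ▸ hfn n
          by_cases hlt : n < d * b ^ (k + 1)
          · left
            obtain ⟨t, ht⟩ := (Nat.modEq_iff_dvd' (le_of_lt hlt)).1 hcong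
            have ht1 : 1 ≤ t := by
              rcases Nat.eq_zero_or_pos t with h | h
              · subst h; omega
              · exact h
            refine ⟨t - 1, ?_, ?_⟩
            · have hta : a * t ≤ d * b ^ (k + 1) := by omega
              have : t ≤ d * b ^ (k + 1) / a := by
                rw [Nat.le_div_iff_mul_le ha0, Nat.mul_comm t a]; omega
              omega
            · have hsub : t - 1 + 1 = t := Nat.sub_add_cancel ht1
              rw [hsub]; omega
          · right
            push_neg at hlt
            obtain ⟨t, ht⟩ := (Nat.modEq_iff_dvd' hlt).1 hcong.symm
            refine ⟨t, ?_, by omega⟩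
            rw [hFm]
            intro hrep
            exact (hF n).1 hnF ((grep_succ b k ha0 n).2 ⟨d, t, hd, hrep, by omega⟩)
        · rintro (⟨j, hj, rfl⟩ | ⟨m, hm, rfl⟩)
          · have hja : a * (j + 1) ≤ d * b ^ (k + 1) := hlowmem hj
            have hpos : 0 < a * (j + 1) := by positivity
            have hcong : d * b ^ (k + 1) - a * (j + 1) ≡ d * b ^ (k + 1) [MOD a] :=
              (Nat.modEq_iff_dvd' (by omega)).2 ⟨j + 1, by omega⟩
            refine ⟨?_, hfd d _ hd hcong⟩
            rw [hF, grep_succ b k ha0]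
            rintro ⟨d', m', hd', hm', heq⟩
            have hcong2 : d * b ^ (k + 1) - a * (j + 1) ≡ d' * b ^ (k + 1) [MOD a] := by
              rw [heq]
              exact ((Nat.modEq_iff_dvd' (by omega)).2 ⟨m', by omega⟩).symm
            have : d = d' := hduniq d d' hd hd' (hcong.symm.trans hcong2)
            subst this
            omega
          · have hcong : a * m + d * b ^ (k + 1) ≡ d * b ^ (k + 1) [MOD a] :=
              ((Nat.modEq_iff_dvd' (by omega)).2 ⟨m, by omega⟩).symm
            refine ⟨?_, hfd d _ hd hcong⟩
            rw [hF, grep_succ b k ha0]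
            rintro ⟨d', m', hd', hm', heq⟩
            have hcong2 : a * m + d * b ^ (k + 1) ≡ d' * b ^ (k + 1) [MOD a] := by
              rw [heq]
              exact ((Nat.modEq_iff_dvd' (by omega)).2 ⟨m', by omega⟩).symm
            have : d = d' := hduniq d d' hd hd' (hcong.symm.trans hcong2)
            subst this
            have : m = m' := Nat.eq_of_mul_eq_mul_left ha0 (by omega)
            exact ((hFm m).1 hm) (this ▸ hm')
      have hdisj : Disjoint lowS highS := by
        rw [Finset.disjoint_left]
        rintro n hn1 hn2
        rw [hlowdef, mem_image] at hn1
        rw [hhighdef, mem_image] at hn2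
        obtain ⟨j, hj, rfl⟩ := hn1
        obtain ⟨m, hm, heq⟩ := hn2
        rw [mem_range] at hj
        have hja : a * (j + 1) ≤ d * b ^ (k + 1) := hlowmem hj
        have hpos : 0 < a * (j + 1) := by positivity
        omega
      have hlowcard : lowS.card = d * b ^ (k + 1) / a := by
        rw [hlowdef, Finset.card_image_of_injOn, Finset.card_range]
        intro j hj j' hj' heq
        dsimp only at heq
        rw [mem_coe, mem_range] at hj hj'
        have h1 : a * (j + 1) ≤ d * b ^ (k + 1) := hlowmem hj
        have h2 : a * (j' + 1) ≤ d * b ^ (k + 1) := hlowmem hj'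
        have : a * (j + 1) = a * (j' + 1) := by omega
        have := Nat.eq_of_mul_eq_mul_left ha0 this
        omega
      have hhighcard : highS.card = Gn a b k := by
        rw [hhighdef, Finset.card_image_of_injOn, hFmcard]
        intro m _ m' _ heq
        dsimp only at heq
        have : a * m = a * m' := by omega
        exact Nat.eq_of_mul_eq_mul_left ha0 this
      rw [hset, Finset.card_union_of_disjoint hdisj, hlowcard, hhighcard]
    rw [hfib, Finset.sum_congr rfl hfibcard, Finset.sum_add_distrib,
      Finset.sum_const, Finset.card_range, smul_eq_mul]
    show _ = a * Gn a b k + ∑ d ∈ Finset.range a, d * b ^ (k + 1) / a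
    ring

private lemma gn_cast {a b : ℕ} (ha : 1 < a) (hb : 1 < b) (hab : Nat.Coprime a b)
    (hne : a ≠ b) : ∀ k, (Gn a b k : ℚ) =
      (((b : ℚ) - 1) * (a : ℚ) ^ (k + 1) - ((a : ℚ) - 1) * (b : ℚ) ^ (k + 1) + a - b) /
        (2 * ((a : ℚ) - b)) := by
  have hQ : (a : ℚ) - b ≠ 0 := sub_ne_zero.mpr (by exact_mod_cast hne)
  intro k
  induction k with
  | zero =>
    show ((0 : ℕ) : ℚ) = _
    rw [Nat.cast_zero, eq_comm, div_eq_zero_iff]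
    left; ring
  | succ k ih =>
    have hcop : Nat.Coprime a (b ^ (k + 1)) := hab.pow_right _
    have hstep : (Gn a b (k + 1) : ℚ)
        = (a : ℚ) * (Gn a b k : ℚ) + ((a : ℚ) - 1) * ((b : ℚ) ^ (k + 1) - 1) / 2 := by
      have h0 : Gn a b (k + 1) = a * Gn a b k + ∑ d ∈ range a, d * b ^ (k + 1) / a := rfl
      rw [h0, Nat.cast_add, Nat.cast_mul, esum ha hcop]
      push_cast
      ring
    rw [hstep, ih]
    field_simp
    ring

/-- For coprime `a, b > 1` with `a ≠ b` and `k ≥ 1`, the number of nonnegative integers not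
representable by the geometric sequence `a^k, a^{k-1}b, …, b^k` equals
`((b−1)a^{k+1} − (a−1)b^{k+1} + a − b)/(2(a−b))`. -/
theorem geometric_genus (a b k : ℕ) (ha : 1 < a) (hb : 1 < b) (hab : Nat.Coprime a b)
    (hne : a ≠ b) (hk : 1 ≤ k)
    (NR : Finset ℕ)
    (hNR : ∀ n : ℕ, n ∈ NR ↔
      ¬ ∃ c : Fin (k + 1) → ℕ, n = ∑ i : Fin (k + 1), c i * (a ^ (k - (i : ℕ)) * b ^ (i : ℕ))) :
    (NR.card : ℚ) =
      (((b : ℚ) - 1) * (a : ℚ) ^ (k + 1) - ((a : ℚ) - 1) * (b : ℚ) ^ (k + 1) + a - b) /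
        (2 * ((a : ℚ) - b)) := by
  have hrep : ∀ n, n ∈ NR ↔ ¬ GRep a b k n := fun n => hNR n
  rw [card_gaps ha hab k NR hrep]
  exact gn_cast ha hb hab hne k
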